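/- If a set X* ⊆ X is variationally stable, then X* is convex. Specifically, if there is a neighborhood U of X* such that ⟨v(x), x − x*⟩ ≤ 0 for all x ∈ U and x* ∈ X*, with equality (for a given x*) iff x ∈ X*, then for any x₀, x₁ ∈ X* and λ ∈ [0,1], the point (1−λ)x₀ + λx₁ belongs to X*. -/

import Mathlib

/-- A variationally stable set `X*` is convex. -/
theorem stmt1
    {E : Type*} [NormedAddCommGroup E] [InnerProductSpace ℝ E] [FiniteDimensional ℝ E]
    (X : Set E) (hXc : IsCompact X) (hXconv : Convex ℝ X)
    (v : E → E) (hv : ContinuousOn v X)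
    (Xs : Set E) (hXsX : Xs ⊆ X) (hXsne : Xs.Nonempty) (hXscl : IsClosed Xs)
    (U : Set E) (hU : ∀ p ∈ Xs, U ∈ nhds p)
    (hVS : ∀ x ∈ X ∩ U, ∀ p ∈ Xs, (inner ℝ (v x) (x - p) : ℝ) ≤ 0)
    (hVSeq : ∀ x ∈ X ∩ U, ∀ p ∈ Xs, ((inner ℝ (v x) (x - p) : ℝ) = 0 ↔ x ∈ Xs)) :
    ∀ x₀ ∈ Xs, ∀ x₁ ∈ Xs, ∀ l ∈ Set.Icc (0 : ℝ) 1, (1 - l) • x₀ + l • x₁ ∈ Xs := by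
  intro x₀ hx₀ x₁ hx₁ l hl
  set f : ℝ → E := fun t => (1 - t) • x₀ + t • x₁ with hf
  have hfc : Continuous f := by
    apply Continuous.add
    · exact (continuous_const.sub continuous_id).smul continuous_const
    · exact continuous_id.smul continuous_const
  -- key: if s ∈ [0,1] and f s ∈ U, then f s ∈ Xs
  have key : ∀ s ∈ Set.Icc (0:ℝ) 1, f s ∈ U → f s ∈ Xs := by
    intro s hs hU'
    rcases eq_or_lt_of_le hs.1 with h0 | h0
    · have : f s = x₀ := by simp [hf, ← h0]
      rwa [this]
    · have hfX : f s ∈ X :=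
        hXconv (hXsX hx₀) (hXsX hx₁) (by linarith [hs.2]) (le_of_lt h0) (by ring)
      have ha := hVS (f s) ⟨hfX, hU'⟩ x₀ hx₀
      have hb := hVS (f s) ⟨hfX, hU'⟩ x₁ hx₁
      have hzero : (1 - s) • (f s - x₀) + s • (f s - x₁) = 0 := by
        simp only [hf]
        module
      have hsum : (1 - s) * (inner ℝ (v (f s)) (f s - x₀) : ℝ)
          + s * (inner ℝ (v (f s)) (f s - x₁) : ℝ) = 0 := by
        rw [← real_inner_smul_right, ← real_inner_smul_right, ← inner_add_right, hzero,
          inner_zero_right]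
      have ha' : (1 - s) * (inner ℝ (v (f s)) (f s - x₀) : ℝ) ≤ 0 :=
        mul_nonpos_of_nonneg_of_nonpos (by linarith [hs.2]) ha
      have hb' : s * (inner ℝ (v (f s)) (f s - x₁) : ℝ) ≤ 0 :=
        mul_nonpos_of_nonneg_of_nonpos (le_of_lt h0) hb
      have hb0 : (inner ℝ (v (f s)) (f s - x₁) : ℝ) = 0 := by
        have : s * (inner ℝ (v (f s)) (f s - x₁) : ℝ) = 0 := by linarith
        rcases mul_eq_zero.mp this with h | h
        · exact absurd h (ne_of_gt h0)
        · exact h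
      exact (hVSeq (f s) ⟨hfX, hU'⟩ x₁ hx₁).mp hb0
  -- clopen argument on [0,1]
  haveI : ConnectedSpace (Set.Icc (0:ℝ) 1) :=
    Subtype.connectedSpace (isConnected_Icc (by norm_num))
  set A : Set (Set.Icc (0:ℝ) 1) := {t | f t ∈ Xs} with hA
  have hAclosed : IsClosed A := hXscl.preimage (hfc.comp continuous_subtype_val)
  have hAopen : IsOpen A := by
    rw [isOpen_iff_mem_nhds]
    intro t ht
    have h1 : U ∈ nhds (f t) := hU _ ht
    have h2 : (fun t : Set.Icc (0:ℝ) 1 => f t) ⁻¹' U ∈ nhds t :=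
      (hfc.comp continuous_subtype_val).continuousAt.preimage_mem_nhds h1
    filter_upwards [h2] with s hs
    exact key s s.2 hs
  have hAne : A.Nonempty := by
    refine ⟨⟨0, by norm_num⟩, ?_⟩
    show f 0 ∈ Xs
    simpa [hf] using hx₀
  have : A = Set.univ := (IsClopen.eq_univ ⟨hAclosed, hAopen⟩ hAne)
  have hmem : (⟨l, hl⟩ : Set.Icc (0:ℝ) 1) ∈ A := this ▸ Set.mem_univ _
  exact hmem
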